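/- If H is a noncentral chi-squared random variable with k degrees of freedom and noncentrality parameter ν, then for any y > 0, P(H ≥ k + ν + 2√((k + 2ν)y) + 2y) ≤ exp(−y). -/

import Mathlib

open MeasureTheory ProbabilityTheory Real
open scoped NNReal ENNReal

lemma aux_log_bound {u : ℝ} (h0 : 0 ≤ u) (h1 : u < 1) :
    -Real.log (1 - u) ≤ u + u ^ 2 / (2 * (1 - u)) := by
  have hpos : (0:ℝ) < 1 - u := by linarith
  set x := -Real.log (1 - u) with hx
  have hx0 : 0 ≤ x := by
    simp only [hx, neg_nonneg]
    exact Real.log_nonpos (by linarith) (by linarith)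
  have hs : x ≤ Real.sinh x := Real.self_le_sinh_iff.2 hx0
  have hex : Real.exp x = (1 - u)⁻¹ := by
    rw [hx, Real.exp_neg, Real.exp_log hpos]
  have henx : Real.exp (-x) = 1 - u := by
    rw [hx, neg_neg, Real.exp_log hpos]
  have : Real.sinh x = u + u ^ 2 / (2 * (1 - u)) := by
    rw [Real.sinh_eq, hex, henx]
    field_simp
    ring
  linarith [hs, this.symm.le]

lemma aux_gaussian_sq_exp (a t : ℝ) (ht : t < 1/2) :
    Integrable (fun x => Real.exp (t * (x + a) ^ 2)) (gaussianReal 0 1) ∧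
    ∫ x, Real.exp (t * (x + a) ^ 2) ∂(gaussianReal 0 1)
      = Real.exp (t * a ^ 2 / (1 - 2 * t)) / Real.sqrt (1 - 2 * t) := by
  have h1 : (0:ℝ) < 1 - 2 * t := by linarith
  set b : ℝ := (1 - 2 * t) / 2 with hbdef
  have hb : 0 < b := by positivity
  set c : ℝ := 2 * t * a / (1 - 2 * t) with hcdef
  set d : ℝ := t * a ^ 2 / (1 - 2 * t) with hddef
  have key : ∀ x : ℝ, gaussianPDFReal 0 1 x * Real.exp (t * (x + a) ^ 2)
      = (Real.sqrt (2 * π))⁻¹ * Real.exp (-b * (x - c) ^ 2 + d) := by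
    intro x
    rw [gaussianPDFReal]
    have h2 : ((2:ℝ) * π * ((1:ℝ≥0) : ℝ)) = 2 * π := by norm_num
    rw [h2, mul_assoc, ← Real.exp_add]
    congr 1
    have : -(x - 0) ^ 2 / (2 * ((1:ℝ≥0):ℝ)) + t * (x + a) ^ 2 = -b * (x - c) ^ 2 + d := by
      rw [hbdef, hcdef, hddef]
      push_cast
      field_simp
      ring
    simpa using this
  have hleb_int : Integrable (fun x => (Real.sqrt (2 * π))⁻¹ * Real.exp (-b * (x - c) ^ 2 + d))
      (volume : Measure ℝ) := by
    simp_rw [Real.exp_add]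
    exact (((integrable_exp_neg_mul_sq hb).comp_sub_right c).mul_const _).const_mul _
  have hgauss : ∫ x : ℝ, Real.exp (-b * (x - c) ^ 2) = Real.sqrt (π / b) := by
    simp_rw [sub_eq_add_neg]
    rw [integral_add_right_eq_self (fun x => Real.exp (-b * x ^ 2)) (-c)]
    exact integral_gaussian b
  have hconst : (Real.sqrt (2 * π))⁻¹ * Real.sqrt (π / b) = (Real.sqrt (1 - 2 * t))⁻¹ := by
    rw [show (1 - 2 * t) = 2 * b by rw [hbdef]; ring]
    rw [Real.sqrt_mul (by norm_num : (0:ℝ) ≤ 2), Real.sqrt_mul (by norm_num : (0:ℝ) ≤ 2),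
      Real.sqrt_div pi_pos.le]
    have hπ : Real.sqrt π ≠ 0 := ne_of_gt (Real.sqrt_pos.2 pi_pos)
    have hb' : Real.sqrt b ≠ 0 := ne_of_gt (Real.sqrt_pos.2 hb)
    have h2 : Real.sqrt 2 ≠ 0 := by positivity
    field_simp
  have hleb : ∫ x : ℝ, (Real.sqrt (2 * π))⁻¹ * Real.exp (-b * (x - c) ^ 2 + d)
      = Real.exp d / Real.sqrt (1 - 2 * t) := by
    simp_rw [Real.exp_add]
    rw [integral_const_mul, integral_mul_const, hgauss,
      show (Real.sqrt (2 * π))⁻¹ * (Real.sqrt (π / b) * Real.exp d)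
        = ((Real.sqrt (2 * π))⁻¹ * Real.sqrt (π / b)) * Real.exp d from by ring,
      hconst, inv_mul_eq_div]
  have hg : gaussianReal 0 1 = (volume : Measure ℝ).withDensity (gaussianPDF 0 1) :=
    gaussianReal_of_var_ne_zero 0 one_ne_zero
  have hpdf : gaussianPDF 0 1 = fun x => ((Real.toNNReal (gaussianPDFReal 0 1 x) : ℝ≥0) : ℝ≥0∞) :=
    rfl
  have hmeas : Measurable fun x => Real.toNNReal (gaussianPDFReal 0 1 x) :=
    (measurable_gaussianPDFReal 0 1).real_toNNReal
  have hsmul : ∀ x : ℝ, (Real.toNNReal (gaussianPDFReal 0 1 x)) • Real.exp (t * (x + a) ^ 2)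
      = (Real.sqrt (2 * π))⁻¹ * Real.exp (-b * (x - c) ^ 2 + d) := by
    intro x
    rw [NNReal.smul_def, Real.coe_toNNReal _ (gaussianPDFReal_nonneg 0 1 x), smul_eq_mul, key x]
  constructor
  · rw [hg, hpdf, integrable_withDensity_iff_integrable_smul hmeas]
    exact (integrable_congr (Filter.Eventually.of_forall hsmul)).mpr hleb_int
  · rw [hg, hpdf, integral_withDensity_eq_integral_smul hmeas]
    rw [integral_congr_ae (Filter.Eventually.of_forall hsmul), hleb]

lemma aux_mgf_bound (a t : ℝ) (ht0 : 0 ≤ t) (ht : t < 1/2) :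
    Real.exp (t * a ^ 2 / (1 - 2 * t)) / Real.sqrt (1 - 2 * t)
      ≤ Real.exp ((t + t ^ 2 / (1 - 2 * t)) + (t + 2 * t ^ 2 / (1 - 2 * t)) * a ^ 2) := by
  have h1 : (0:ℝ) < 1 - 2 * t := by linarith
  have hsq : Real.sqrt (1 - 2 * t) = Real.exp (Real.log (1 - 2 * t) / 2) := by
    rw [← Real.exp_log (Real.sqrt_pos.2 h1), Real.log_sqrt h1.le]
  rw [hsq, ← Real.exp_sub, Real.exp_le_exp]
  have hlog : -Real.log (1 - 2 * t) / 2 ≤ t + t ^ 2 / (1 - 2 * t) := by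
    have := aux_log_bound (u := 2 * t) (by linarith) (by linarith)
    have h2 : (2 * t) ^ 2 / (2 * (1 - 2 * t)) = 2 * (t ^ 2 / (1 - 2 * t)) := by
      field_simp
    linarith [this, h2.le]
  have hid : t * a ^ 2 / (1 - 2 * t) = t * a ^ 2 + 2 * t ^ 2 / (1 - 2 * t) * a ^ 2 := by
    have h1' : 1 - 2 * t ≠ 0 := h1.ne'
    rw [div_mul_eq_mul_div, add_div' _ _ _ h1', div_left_inj' h1']
    ring
  nlinarith [hlog, hid]

lemma aux_iIndepFun_ae_eq {Ω : Type*} [MeasurableSpace Ω] {μ : Measure Ω}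
    {ι : Type*} [Countable ι] {β : ι → Type*} [m : ∀ i, MeasurableSpace (β i)]
    {f g : ∀ i, Ω → β i} (hf : iIndepFun f μ) (h : ∀ i, f i =ᵐ[μ] g i) :
    iIndepFun g μ := by
  rw [iIndepFun_iff_measure_inter_preimage_eq_mul] at hf ⊢
  intro S sets hsets
  have hae : ∀ᵐ ω ∂μ, ∀ i, f i ω = g i ω := ae_all_iff.2 h
  have hset : ∀ (i : ι) (s : Set (β i)), (f i ⁻¹' s : Set Ω) =ᵐ[μ] (g i ⁻¹' s) := by
    intro i s
    rw [Filter.eventuallyEq_set]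
    filter_upwards [h i] with ω hω
    simp only [Set.mem_preimage, hω]
  have hinter : (⋂ i ∈ S, f i ⁻¹' sets i : Set Ω) =ᵐ[μ] (⋂ i ∈ S, g i ⁻¹' sets i) := by
    rw [Filter.eventuallyEq_set]
    filter_upwards [hae] with ω hω
    simp only [Set.mem_iInter, Set.mem_preimage, hω]
  rw [measure_congr hinter.symm, hf S hsets]
  exact Finset.prod_congr rfl fun i _ => measure_congr (hset i (sets i))

/-- Upper-tail concentration bound for a noncentral chi-squared random variable with
`k` degrees of freedom and noncentrality `ν`, realised as `H = Σ (Z i + a i)^2` with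
`Z i` i.i.d. standard Gaussians and `Σ (a i)^2 = ν`. -/
theorem noncentral_chisq_upper_tail
    {Ω : Type*} [MeasureSpace Ω] [IsProbabilityMeasure (ℙ : Measure Ω)]
    (k : ℕ) (Z : Fin k → Ω → ℝ)
    (hindep : iIndepFun Z ℙ)
    (hlaw : ∀ i, Measure.map (Z i) ℙ = gaussianReal 0 1)
    (a : Fin k → ℝ) (ν : ℝ) (hν : ∑ i, (a i) ^ 2 = ν)
    (H : Ω → ℝ) (hH : ∀ ω, H ω = ∑ i, (Z i ω + a i) ^ 2)
    (y : ℝ) (hy : 0 < y) :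
    ℙ {ω | (k : ℝ) + ν + 2 * Real.sqrt ((k + 2 * ν) * y) + 2 * y ≤ H ω} ≤
      ENNReal.ofReal (Real.exp (-y)) := by
  have hν0 : 0 ≤ ν := hν ▸ Finset.sum_nonneg fun i _ => sq_nonneg _
  rcases Nat.eq_zero_or_pos k with hk | hk
  · subst hk
    have hν' : ν = 0 := by rw [← hν]; simp
    have hempty : {ω | (0:ℕ) + ν + 2 * Real.sqrt (((0:ℕ) + 2 * ν) * y) + 2 * y ≤ H ω} = ∅ := by
      ext ω
      simp only [Set.mem_setOf_eq, Set.mem_empty_iff_false, iff_false, not_le, hH ω, hν']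
      simp
      linarith
    rw [hempty]
    simp
  · have hk1 : (1:ℝ) ≤ (k:ℝ) := by exact_mod_cast hk
    set v : ℝ := (k:ℝ) + 2 * ν with hvdef
    have hv0 : 0 < v := by rw [hvdef]; linarith
    set w : ℝ := Real.sqrt v with hwdef
    set s : ℝ := Real.sqrt y with hsdef
    have hw0 : 0 < w := Real.sqrt_pos.2 hv0
    have hs0 : 0 < s := Real.sqrt_pos.2 hy
    have hw2 : w ^ 2 = v := Real.sq_sqrt hv0.le
    have hs2 : s ^ 2 = y := Real.sq_sqrt hy.le
    have hden : 0 < w + 2 * s := by linarith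
    set t : ℝ := s / (w + 2 * s) with htdef
    have ht0 : 0 < t := div_pos hs0 hden
    have h12 : 1 - 2 * t = w / (w + 2 * s) := by
      rw [htdef]; field_simp; ring
    have h12pos : 0 < 1 - 2 * t := by rw [h12]; positivity
    have hthalf : t < 1/2 := by linarith
    -- measurable modifications
    have hZae : ∀ i, AEMeasurable (Z i) ℙ := fun i =>
      aemeasurable_of_map_neZero (by rw [hlaw i]; infer_instance)
    set Z' : Fin k → Ω → ℝ := fun i => (hZae i).mk (Z i) with hZ'def
    have hZ'meas : ∀ i, Measurable (Z' i) := fun i => (hZae i).measurable_mk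
    have hZeq : ∀ i, Z i =ᵐ[ℙ] Z' i := fun i => (hZae i).ae_eq_mk
    have hlaw' : ∀ i, Measure.map (Z' i) ℙ = gaussianReal 0 1 := fun i => by
      rw [← Measure.map_congr (hZeq i), hlaw i]
    have hindep' : iIndepFun Z' ℙ := aux_iIndepFun_ae_eq hindep hZeq
    set X : Fin k → Ω → ℝ := fun i ω => (Z' i ω + a i) ^ 2 with hXdef
    have hXmeas : ∀ i, Measurable (X i) := fun i => ((hZ'meas i).add_const _).pow_const 2
    have hXindep : iIndepFun X ℙ :=
      hindep'.comp (fun i => fun x : ℝ => (x + a i) ^ 2)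
        (fun i => (measurable_id.add_const _).pow_const 2)
    have hgauss := fun i => aux_gaussian_sq_exp (a i) t hthalf
    have hsm : ∀ i : Fin k,
        AEStronglyMeasurable (fun x : ℝ => Real.exp (t * (x + a i) ^ 2))
          (Measure.map (Z' i) ℙ) := fun i =>
      (((measurable_id.add_const _).pow_const 2).const_mul t).exp.aestronglyMeasurable
    have hint : ∀ i, Integrable (fun ω => Real.exp (t * X i ω)) ℙ := by
      intro i
      have h := (hgauss i).1
      rw [← hlaw' i] at h
      exact (integrable_map_measure (hsm i) (hZ'meas i).aemeasurable).1 h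
    have hmgf : ∀ i, mgf (X i) ℙ t
        = Real.exp (t * (a i) ^ 2 / (1 - 2 * t)) / Real.sqrt (1 - 2 * t) := by
      intro i
      rw [mgf]
      have hmap : ∫ x, Real.exp (t * (x + a i) ^ 2) ∂(Measure.map (Z' i) ℙ)
          = ∫ ω, Real.exp (t * (Z' i ω + a i) ^ 2) ∂ℙ :=
        integral_map (hZ'meas i).aemeasurable (hsm i)
      rw [show (fun ω => Real.exp (t * X i ω)) = fun ω => Real.exp (t * (Z' i ω + a i) ^ 2)
        from rfl, ← hmap, hlaw' i, (hgauss i).2]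
    have hSint : Integrable (fun ω => Real.exp (t * (∑ i, X i) ω)) ℙ :=
      hXindep.integrable_exp_mul_sum hXmeas (fun i _ => hint i)
    set ε : ℝ := (k:ℝ) + ν + 2 * Real.sqrt (((k:ℝ) + 2 * ν) * y) + 2 * y with hεdef
    have chern := measure_ge_le_exp_mul_mgf (X := ∑ i, X i) (μ := ℙ) ε ht0.le hSint
    have hprod : mgf (∑ i, X i) ℙ t = ∏ i, mgf (X i) ℙ t :=
      hXindep.mgf_sum hXmeas Finset.univ
    have hprodle : ∏ i, mgf (X i) ℙ t
        ≤ Real.exp ((k:ℝ) * (t + t ^ 2 / (1 - 2 * t)) + (t + 2 * t ^ 2 / (1 - 2 * t)) * ν) := by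
      calc ∏ i, mgf (X i) ℙ t
          ≤ ∏ i, Real.exp ((t + t ^ 2 / (1 - 2 * t)) + (t + 2 * t ^ 2 / (1 - 2 * t)) * (a i) ^ 2) :=
            Finset.prod_le_prod (fun i _ => by rw [hmgf i]; positivity)
              (fun i _ => by rw [hmgf i]; exact aux_mgf_bound (a i) t ht0.le hthalf)
        _ = Real.exp (∑ i, ((t + t ^ 2 / (1 - 2 * t))
              + (t + 2 * t ^ 2 / (1 - 2 * t)) * (a i) ^ 2)) := (Real.exp_sum _ _).symm
        _ = _ := by
            rw [Finset.sum_add_distrib, Finset.sum_const, ← Finset.mul_sum, hν]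
            simp [Finset.card_univ]
            ring
    have hsqvy : Real.sqrt (((k:ℝ) + 2 * ν) * y) = w * s := by
      rw [← hvdef, Real.sqrt_mul hv0.le, ← hwdef, ← hsdef]
    have hexp : -t * ε + ((k:ℝ) * (t + t ^ 2 / (1 - 2 * t))
        + (t + 2 * t ^ 2 / (1 - 2 * t)) * ν) = -y := by
      have e1 : (k:ℝ) * (t + t ^ 2 / (1 - 2 * t)) + (t + 2 * t ^ 2 / (1 - 2 * t)) * ν
          = t * ((k:ℝ) + ν) + t ^ 2 * w ^ 2 / (1 - 2 * t) := by
        rw [hw2, hvdef]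
        field_simp
        ring
      rw [e1, hεdef, hsqvy, ← hs2, h12, htdef]
      field_simp
      ring
    have hfinal : (ℙ {ω | ε ≤ (∑ i, X i) ω}).toReal ≤ Real.exp (-y) := by
      calc (ℙ {ω | ε ≤ (∑ i, X i) ω}).toReal
          ≤ Real.exp (-t * ε) * mgf (∑ i, X i) ℙ t := chern
        _ ≤ Real.exp (-t * ε) * Real.exp ((k:ℝ) * (t + t ^ 2 / (1 - 2 * t))
              + (t + 2 * t ^ 2 / (1 - 2 * t)) * ν) := by
            rw [hprod]
            exact mul_le_mul_of_nonneg_left hprodle (Real.exp_nonneg _)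
        _ = Real.exp (-y) := by rw [← Real.exp_add, hexp]
    have hsets : {ω | ε ≤ H ω} =ᵐ[ℙ] {ω | ε ≤ (∑ i, X i) ω} := by
      rw [Filter.eventuallyEq_set]
      filter_upwards [ae_all_iff.2 hZeq] with ω hω
      simp only [Set.mem_setOf_eq, hH ω, Finset.sum_apply]
      have : ∑ i, (Z i ω + a i) ^ 2 = ∑ i, X i ω :=
        Finset.sum_congr rfl fun i _ => by rw [hω i]
      rw [this]
    calc ℙ {ω | ε ≤ H ω} = ℙ {ω | ε ≤ (∑ i, X i) ω} := measure_congr hsets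
      _ ≤ ENNReal.ofReal (Real.exp (-y)) :=
          (ENNReal.le_ofReal_iff_toReal_le (measure_ne_top _ _) (Real.exp_nonneg _)).2 hfinal
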